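/- Let A, B : ℝ → Matrix(k,k,ℂ) with A differentiable and satisfying the Lax equation A'(z) = A(z)·B(z) − B(z)·A(z) for all z ∈ ℝ. Then for every η ∈ ℂ the function z ↦ det(η·I − A(z)) is constant on ℝ; in particular the coefficients of the characteristic polynomial of A(z) are conserved quantities. -/

import Mathlib

open Matrix

attribute [local instance] Matrix.normedAddCommGroup Matrix.normedSpace

-- Jacobi's formula
lemma jacobi {k : ℕ} (M : ℝ → Matrix (Fin k) (Fin k) ℂ) (N : Matrix (Fin k) (Fin k) ℂ) (z : ℝ)
    (h : ∀ i j, HasDerivAt (fun t => M t i j) (N i j) z) :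
    HasDerivAt (fun t => (M t).det) (Matrix.trace (Matrix.adjugate (M z) * N)) z := by
  have key : HasDerivAt (fun t => (M t).det)
      (∑ σ : Equiv.Perm (Fin k), ((Equiv.Perm.sign σ : ℤ) : ℂ) *
        ∑ i, (∏ j ∈ Finset.univ.erase i, M z (σ j) j) • N (σ i) i) z := by
    have hdet : ∀ t, (M t).det = ∑ σ : Equiv.Perm (Fin k),
        ((Equiv.Perm.sign σ : ℤ) : ℂ) * ∏ i, M t (σ i) i := fun t => Matrix.det_apply' (M t)
    simp only [hdet]
    exact HasDerivAt.fun_sum fun σ _ =>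
      ((HasDerivAt.fun_finsetProd (fun i _ => h (σ i) i))).const_mul _
  convert key using 1
  -- algebraic identity
  have lhs : Matrix.trace (Matrix.adjugate (M z) * N)
      = ∑ i, (Matrix.updateCol (M z) i (fun r => N r i)).det := by
    have : ∀ i : Fin k, (Matrix.updateCol (M z) i (fun r => N r i)).det
        = Matrix.cramer (M z) (fun r => N r i) i := fun i => (Matrix.cramer_apply _ _ _).symm
    simp only [this, Matrix.cramer_eq_adjugate_mulVec, Matrix.trace, Matrix.diag,
      Matrix.mul_apply, Matrix.mulVec, dotProduct]
  rw [lhs]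
  have rhs : ∀ i : Fin k, (Matrix.updateCol (M z) i (fun r => N r i)).det
      = ∑ σ : Equiv.Perm (Fin k), ((Equiv.Perm.sign σ : ℤ) : ℂ) *
          ((∏ j ∈ Finset.univ.erase i, M z (σ j) j) * N (σ i) i) := by
    intro i
    rw [Matrix.det_apply']
    congr 1
    ext σ
    congr 1
    rw [← Finset.mul_prod_erase (Finset.univ) _ (Finset.mem_univ i)]
    rw [Matrix.updateCol_self, mul_comm]
    congr 1
    refine Finset.prod_congr rfl fun j hj => ?_
    rw [Matrix.updateCol_ne (Finset.ne_of_mem_erase hj)]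
  simp only [rhs, smul_eq_mul]
  rw [Finset.sum_comm]
  simp [Finset.mul_sum]

theorem stmt14 (k : ℕ) (hk : 1 ≤ k) (A B : ℝ → Matrix (Fin k) (Fin k) ℂ)
    (hLax : ∀ z : ℝ, HasDerivAt A (A z * B z - B z * A z) z) :
    ∀ η : ℂ, ∀ z w : ℝ,
      (η • (1 : Matrix (Fin k) (Fin k) ℂ) - A z).det =
        (η • (1 : Matrix (Fin k) (Fin k) ℂ) - A w).det := by
  intro η
  set f : ℝ → ℂ := fun z => (η • (1 : Matrix (Fin k) (Fin k) ℂ) - A z).det with hf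
  have hderiv : ∀ z : ℝ, HasDerivAt f 0 z := by
    intro z
    set M : Matrix (Fin k) (Fin k) ℂ := η • (1 : Matrix (Fin k) (Fin k) ℂ) - A z with hM
    have hA : ∀ i j, HasDerivAt (fun t => A t i j) ((A z * B z - B z * A z) i j) z := by
      intro i j
      exact hasDerivAt_pi.mp (hasDerivAt_pi.mp (hLax z) i) j
    have hMd : ∀ i j, HasDerivAt (fun t => (η • (1 : Matrix (Fin k) (Fin k) ℂ) - A t) i j)
        ((M * B z - B z * M) i j) z := by
      intro i j
      have h1 : (M * B z - B z * M) i j = -((A z * B z - B z * A z) i j) := by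
        have : M * B z - B z * M = -(A z * B z - B z * A z) := by
          rw [hM]
          simp only [Matrix.sub_mul, Matrix.mul_sub, Matrix.smul_mul, Matrix.mul_smul,
            Matrix.one_mul, Matrix.mul_one]
          noncomm_ring
        rw [this, Matrix.neg_apply]
      rw [h1]
      have h2 : ∀ t, (η • (1 : Matrix (Fin k) (Fin k) ℂ) - A t) i j
          = (η • (1 : Matrix (Fin k) (Fin k) ℂ)) i j - A t i j := fun t => rfl
      simp only [h2]
      exact (hA i j).const_sub _
    have := jacobi (fun t => η • (1 : Matrix (Fin k) (Fin k) ℂ) - A t) (M * B z - B z * M) z hMd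
    have htr : Matrix.trace (Matrix.adjugate M * (M * B z - B z * M)) = 0 := by
      rw [Matrix.mul_sub, Matrix.trace_sub, ← Matrix.mul_assoc, Matrix.adjugate_mul,
        ← Matrix.mul_assoc, Matrix.trace_mul_cycle (Matrix.adjugate M) (B z) M,
        Matrix.mul_adjugate, sub_self]
    rw [htr] at this
    exact this
  intro z w
  exact is_const_of_deriv_eq_zero (fun x => (hderiv x).differentiableAt)
    (fun x => (hderiv x).deriv) z w
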